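/- Let E = (y^{n₀}, x^{m₁}y^{n₁}, ..., x^{m_s}) be staircase monomials with associated d_i, e_i, let σ_{j,i} (0 ≤ i ≤ s−1, i ≤ j ≤ s) be polynomials in K[x,y] satisfying deg_x σ_{j,i} < d_{i+1}, σ_{i,i} ∈ K[x], deg_y σ_{j,i} < e_j for j > i, and define h_s = (x^{d₁}−σ_{0,0})···(x^{d_s}−σ_{s−1,s−1}) and, descending, x^{d_{i+1}} h_i − y^{e_{i+1}} h_{i+1} = Σ_{j=i}^{s} σ_{j,i} h_j. Then for each i, h_i has initial term x^{m_i} y^{n_i} under the lexicographic order y ≻ x, deg_x h_i ≤ m_s with equality only for i = s, and (x^{d₁}−σ_{0,0})···(x^{d_i}−σ_{i−1,i−1}) divides h_i and equals the polynomial coefficient of y^{n_i} in h_i. -/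
import Mathlib

open Polynomial

private lemma deg_mul_lt' {R : Type*} [Semiring R] {a b : Polynomial R} {A B : ℕ}
    (ha : a.degree < (A : WithBot ℕ)) (hb : b.degree ≤ (B : WithBot ℕ)) :
    (a * b).degree < ((A + B : ℕ) : WithBot ℕ) := by
  refine lt_of_le_of_lt (degree_mul_le a b) ?_
  rcases eq_or_ne a 0 with rfl | ha0
  · rw [degree_zero, WithBot.bot_add]; exact WithBot.bot_lt_coe _
  rcases eq_or_ne b 0 with rfl | hb0
  · rw [degree_zero, WithBot.add_bot]; exact WithBot.bot_lt_coe _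
  rw [degree_eq_natDegree ha0, degree_eq_natDegree hb0]
  rw [degree_eq_natDegree ha0] at ha
  rw [degree_eq_natDegree hb0] at hb
  have h1 : a.natDegree < A := by exact_mod_cast ha
  have h2 : b.natDegree ≤ B := by exact_mod_cast hb
  exact_mod_cast (by omega : a.natDegree + b.natDegree < A + B)

theorem stmt17 {K : Type*} [Field K] (s : ℕ) (hs : 0 < s) (m n : ℕ → ℕ)
    (hm0 : m 0 = 0) (hns : n s = 0)
    (hm : ∀ i < s, m i < m (i + 1)) (hn : ∀ i < s, n (i + 1) < n i)
    (sig : ℕ → ℕ → Polynomial (Polynomial K)) (sd : ℕ → Polynomial K)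
    (hdiag : ∀ i < s, sig i i = Polynomial.C (sd i) ∧
      (sd i).degree < ((m (i + 1) - m i : ℕ) : WithBot ℕ))
    (hdegx : ∀ i < s, ∀ j, i ≤ j → j ≤ s → ∀ v : ℕ,
      ((sig j i).coeff v).degree < ((m (i + 1) - m i : ℕ) : WithBot ℕ))
    (hdegy : ∀ i < s, ∀ j, i < j → j ≤ s →
      (sig j i).degree < ((n (j - 1) - n j : ℕ) : WithBot ℕ))
    (H : ℕ → Polynomial (Polynomial K))
    (hHs : H s = Polynomial.C
      (∏ i ∈ Finset.range s, (Polynomial.X ^ (m (i + 1) - m i) - sd i)))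
    (hrec : ∀ i < s,
      Polynomial.C (Polynomial.X ^ (m (i + 1) - m i)) * H i -
          Polynomial.X ^ (n i - n (i + 1)) * H (i + 1)
        = ∑ j ∈ Finset.Icc i s, sig j i * H j) :
    ∀ i ≤ s,
      (H i).natDegree = n i ∧
      (H i).coeff (n i) =
        ∏ j ∈ Finset.range i, (Polynomial.X ^ (m (j + 1) - m j) - sd j) ∧
      Polynomial.C (∏ j ∈ Finset.range i, (Polynomial.X ^ (m (j + 1) - m j) - sd j)) ∣
        H i ∧
      (∀ v : ℕ, ((H i).coeff v).natDegree ≤ m s) ∧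
      (i < s → ∀ v : ℕ, ((H i).coeff v).natDegree < m s) := by
  classical
  set M : ℕ → Polynomial K :=
    fun i => ∏ j ∈ Finset.range i, (Polynomial.X ^ (m (j + 1) - m j) - sd j) with hMdef
  -- monotonicity of m and n
  have hmono_m : ∀ b, b ≤ s → ∀ a, a ≤ b → m a ≤ m b := by
    intro b
    induction b with
    | zero => intro _ a ha; rw [Nat.le_zero] at ha; subst ha; exact le_rfl
    | succ b ih =>
      intro hbs a ha
      rcases Nat.eq_or_lt_of_le ha with rfl | h
      · exact le_rfl
      · exact le_trans (ih (by omega) a (by omega)) (le_of_lt (hm b (by omega)))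
  have hmono_n : ∀ b, b ≤ s → ∀ a, a ≤ b → n b ≤ n a := by
    intro b
    induction b with
    | zero => intro _ a ha; rw [Nat.le_zero] at ha; subst ha; exact le_rfl
    | succ b ih =>
      intro hbs a ha
      rcases Nat.eq_or_lt_of_le ha with rfl | h
      · exact le_rfl
      · exact le_trans (le_of_lt (hn b (by omega))) (ih (by omega) a (by omega))
  have hms_pos : 0 < m s := by
    have h1 : m 0 < m 1 := hm 0 hs
    have h2 := hmono_m s le_rfl 1 hs
    omega
  -- factor facts
  have hfac : ∀ i < s, (X ^ (m (i + 1) - m i) - sd i : Polynomial K).Monic ∧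
      (X ^ (m (i + 1) - m i) - sd i : Polynomial K).degree
        = ((m (i + 1) - m i : ℕ) : WithBot ℕ) := by
    intro i hi
    have hdeg : (sd i).degree < ((m (i + 1) - m i : ℕ) : WithBot ℕ) := (hdiag i hi).2
    constructor
    · exact monic_X_pow_sub hdeg
    · rw [degree_sub_eq_left_of_degree_lt (by rwa [degree_X_pow]), degree_X_pow]
  have hMstep : ∀ k : ℕ, M (k + 1) = M k * (X ^ (m (k + 1) - m k) - sd k) := by
    intro k
    simp only [hMdef]
    exact Finset.prod_range_succ _ _
  -- M facts
  have hMfact : ∀ i ≤ s, (M i).Monic ∧ (M i).natDegree = m i := by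
    intro i
    induction i with
    | zero => intro _; simpa [hMdef] using hm0.symm
    | succ i ih =>
      intro his
      have hi : i < s := his
      obtain ⟨hmon, hdeg⟩ := ih (le_of_lt hi)
      have hf := hfac i hi
      have hfd : (X ^ (m (i + 1) - m i) - sd i : Polynomial K).natDegree
          = m (i + 1) - m i := natDegree_eq_of_degree_eq_some hf.2
      constructor
      · rw [hMstep]
        exact hmon.mul hf.1
      · rw [hMstep, hmon.natDegree_mul hf.1, hdeg, hfd]
        have := hm i hi
        omega
  have hMne : ∀ i ≤ s, M i ≠ 0 := fun i hi => (hMfact i hi).1.ne_zero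
  -- the statement we prove by downward induction
  set Q : ℕ → Prop := fun i =>
    (H i).natDegree = n i ∧ (H i).coeff (n i) = M i ∧ Polynomial.C (M i) ∣ H i ∧
      (∀ v : ℕ, ((H i).coeff v).degree ≤ ((m s : ℕ) : WithBot ℕ)) ∧
      (i < s → ∀ v : ℕ, ((H i).coeff v).degree < ((m s : ℕ) : WithBot ℕ)) with hQdef
  have hQs : Q s := by
    have hMs := hMfact s le_rfl
    refine ⟨?_, ?_, ?_, ?_, ?_⟩
    · rw [hHs, natDegree_C, hns]
    · rw [hHs, hns, coeff_C_zero]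
    · rw [hHs]
    · intro v
      rw [hHs, coeff_C]
      split
      · rw [← hMs.2]; exact degree_le_natDegree
      · simp
    · intro h; omega
  have main : ∀ t, ∀ i, i ≤ s → s - i ≤ t → Q i := by
    intro t
    induction t with
    | zero => intro i hi hti; have : i = s := by omega
              subst this; exact hQs
    | succ t ih =>
      intro i his hti
      rcases eq_or_lt_of_le his with rfl | hi
      · exact hQs
      -- inductive step: i < s, know Q j for all i < j ≤ s
      have IH : ∀ j, i < j → j ≤ s → Q j := fun j h1 h2 => ih j h2 (by omega)
      obtain ⟨hN1, hC1, hdvd1, hb1, _⟩ := IH (i + 1) (by omega) hi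
      -- set up the key equation
      have hrec' := hrec i hi
      have hsplit : Finset.Icc i s = insert i (Finset.Icc (i + 1) s) := by
        ext j; simp only [Finset.mem_Icc, Finset.mem_insert]; omega
      have hnotmem : i ∉ Finset.Icc (i + 1) s := by simp
      rw [hsplit, Finset.sum_insert hnotmem, (hdiag i hi).1] at hrec'
      set e : ℕ := n i - n (i + 1) with hedef
      set S : Polynomial (Polynomial K) := ∑ j ∈ Finset.Icc (i + 1) s, sig j i * H j
        with hSdef
      have key : Polynomial.C ((X : Polynomial K) ^ (m (i + 1) - m i) - sd i) * H i
          = X ^ e * H (i + 1) + S := by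
        rw [map_sub]
        linear_combination hrec'
      set f : Polynomial K := (X : Polynomial K) ^ (m (i + 1) - m i) - sd i with hfdef
      have hfmon := (hfac i hi).1
      have hfdeg := (hfac i hi).2
      have hfnd : f.natDegree = m (i + 1) - m i := natDegree_eq_of_degree_eq_some hfdeg
      have hf0 : f ≠ 0 := hfmon.ne_zero
      have hMsucc : M (i + 1) = M i * f := hMstep i
      have hni : n i = e + n (i + 1) := by
        have := hn i hi; omega
      have hdpos : 0 < m (i + 1) - m i := by have := hm i hi; omega
      -- X^e * H(i+1) coefficients
      have hXe : ∀ v : ℕ, ((X : Polynomial (Polynomial K)) ^ e * H (i + 1)).coeff v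
          = if e ≤ v then (H (i + 1)).coeff (v - e) else 0 := by
        intro v; rw [mul_comm, coeff_mul_X_pow']
      -- S terms are small in y-degree
      have hS_deg : ∀ j ∈ Finset.Icc (i + 1) s,
          (sig j i * H j).degree < ((n i : ℕ) : WithBot ℕ) := by
        intro j hj
        rw [Finset.mem_Icc] at hj
        have hQj := IH j (by omega) hj.2
        have hdegHj : (H j).degree ≤ ((n j : ℕ) : WithBot ℕ) := by
          rw [← hQj.1]; exact degree_le_natDegree
        have hsig := hdegy i hi j (by omega) hj.2
        have h1 : (sig j i * H j).degree < (((n (j - 1) - n j) + n j : ℕ) : WithBot ℕ) :=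
          deg_mul_lt' hsig hdegHj
        have h2 : n j ≤ n (j - 1) := hmono_n j hj.2 (j - 1) (by omega)
        have h3 : n (j - 1) ≤ n i := hmono_n (j - 1) (by omega) i (by omega)
        have h4 : (n (j - 1) - n j) + n j ≤ n i := by omega
        exact lt_of_lt_of_le h1 (by exact_mod_cast h4)
      have hS_coeff : ∀ v : ℕ, n i ≤ v → S.coeff v = 0 := by
        intro v hv
        rw [hSdef, finset_sum_coeff]
        refine Finset.sum_eq_zero fun j hj => ?_
        refine coeff_eq_zero_of_degree_lt (lt_of_lt_of_le (hS_deg j hj) ?_)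
        exact_mod_cast hv
      -- coefficient of H i above n i vanishes
      have hHi_coeff_eq : ∀ v : ℕ,
          f * (H i).coeff v = ((X : Polynomial (Polynomial K)) ^ e * H (i + 1)).coeff v
            + S.coeff v := by
        intro v
        have := congrArg (fun p => Polynomial.coeff p v) key
        simpa [coeff_C_mul] using this
      have hcoeff_top : ∀ v : ℕ, n i < v → (H i).coeff v = 0 := by
        intro v hv
        have h1 := hHi_coeff_eq v
        rw [hXe, if_pos (by omega),
          show (H (i + 1)).coeff (v - e) = 0 from
            coeff_eq_zero_of_natDegree_lt (by rw [hN1]; omega),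
          hS_coeff v (le_of_lt hv), add_zero] at h1
        rcases mul_eq_zero.mp h1 with h | h
        · exact absurd h hf0
        · exact h
      have hcoeff_ni : (H i).coeff (n i) = M i := by
        have h1 := hHi_coeff_eq (n i)
        rw [hXe, if_pos (by omega), hS_coeff (n i) le_rfl, add_zero] at h1
        have h2 : n i - e = n (i + 1) := by omega
        rw [h2, hC1, hMsucc] at h1
        exact mul_left_cancel₀ hf0 (by rw [h1]; ring)
      have hnatdeg : (H i).natDegree = n i := by
        have hle : (H i).natDegree ≤ n i :=
          natDegree_le_iff_coeff_eq_zero.mpr fun N hN => hcoeff_top N hN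
        have hge : n i ≤ (H i).natDegree :=
          le_natDegree_of_ne_zero (by rw [hcoeff_ni]; exact hMne i (le_of_lt hi))
        omega
      -- divisibility
      have hdvd : Polynomial.C (M i) ∣ H i := by
        have hdvdRHS : Polynomial.C (M (i + 1)) ∣ X ^ e * H (i + 1) + S := by
          refine dvd_add (Dvd.dvd.mul_left hdvd1 _) ?_
          refine Finset.dvd_sum fun j hj => ?_
          rw [Finset.mem_Icc] at hj
          have hMj : M (i + 1) ∣ M j := by
            simp only [hMdef]
            exact Finset.prod_dvd_prod_of_subset _ _ _
              (Finset.range_subset_range.mpr hj.1)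
          exact Dvd.dvd.mul_left
            ((_root_.map_dvd Polynomial.C hMj).trans (IH j (by omega) hj.2).2.2.1) _
        rw [← key, hMsucc, map_mul] at hdvdRHS
        have : Polynomial.C f * Polynomial.C (M i) ∣ Polynomial.C f * H i := by
          rwa [mul_comm (Polynomial.C (M i))] at hdvdRHS
        exact (mul_dvd_mul_iff_left (by simpa using hf0)).mp this
      -- x-degree bounds
      have hxlt : ∀ v : ℕ, ((H i).coeff v).degree < ((m s : ℕ) : WithBot ℕ) := by
        intro v
        have hbnd : (f * (H i).coeff v).degree
            < (((m (i + 1) - m i) + m s : ℕ) : WithBot ℕ) := by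
          rw [hHi_coeff_eq v]
          refine lt_of_le_of_lt (degree_add_le _ _) (max_lt ?_ ?_)
          · -- first term
            rw [hXe]
            split
            · refine lt_of_le_of_lt (hb1 _) ?_
              exact_mod_cast (by omega : m s < (m (i + 1) - m i) + m s)
            · rw [degree_zero]; exact WithBot.bot_lt_coe _
          · -- S coefficient
            rw [hSdef, finset_sum_coeff]
            refine lt_of_le_of_lt (degree_sum_le _ _) ?_
            rw [Finset.sup_lt_iff (WithBot.bot_lt_coe _)]
            intro j hj
            rw [Finset.mem_Icc] at hj
            have hQj := IH j (by omega) hj.2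
            rw [coeff_mul]
            refine lt_of_le_of_lt (degree_sum_le _ _) ?_
            rw [Finset.sup_lt_iff (WithBot.bot_lt_coe _)]
            intro p hp
            exact deg_mul_lt' (hdegx i hi j (by omega) hj.2 p.1) (hQj.2.2.2.1 p.2)
        rcases eq_or_ne ((H i).coeff v) 0 with h0 | h0
        · rw [h0, degree_zero]; exact WithBot.bot_lt_coe _
        · rw [degree_mul, hfdeg, degree_eq_natDegree h0] at hbnd
          rw [degree_eq_natDegree h0]
          have : (m (i + 1) - m i) + ((H i).coeff v).natDegree
              < (m (i + 1) - m i) + m s := by exact_mod_cast hbnd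
          exact_mod_cast (by omega : ((H i).coeff v).natDegree < m s)
      exact ⟨hnatdeg, hcoeff_ni, hdvd, fun v => le_of_lt (hxlt v), fun _ v => hxlt v⟩
  intro i hi
  obtain ⟨h1, h2, h3, h4, h5⟩ := main (s - i) i hi le_rfl
  refine ⟨h1, h2, h3, fun v => natDegree_le_iff_degree_le.mpr (h4 v), fun his v => ?_⟩
  rcases eq_or_ne ((H i).coeff v) 0 with h0 | h0
  · rw [h0, natDegree_zero]; exact hms_pos
  · exact (natDegree_lt_iff_degree_lt h0).mpr (h5 his v)
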